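/- Let (Ω, μ) be a measure space and m ∈ 𝕊. The map J on L²(Ω; ℍ; μ) defined by (J f)(x) = m · f(x) is a surjective ℝ-linear isometry satisfying J ∘ J = -id and ⟪J f, g⟫ = -⟪f, J g⟫ for all f, g (so J is anti self-adjoint and unitary with respect to the real inner product), and its slice subspace {f ∈ L²(Ω; ℍ; μ) : J f = f · m} coincides with the set of f taking values in ℂ_m μ-almost everywhere, i.e. with L²(Ω; ℂ_m; μ). -/

import Mathlib

open Quaternion MeasureTheory ENNReal

noncomputable section

/-- `q` belongs to the imaginary unit sphere `𝕊`. -/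
def inS (q : ℍ[ℝ]) : Prop := star q = -q ∧ ‖q‖ = 1

/-- The slice `ℂ_m = {α + mβ : α, β ∈ ℝ}`. -/
def quatSlice (m : ℍ[ℝ]) : Set ℍ[ℝ] := {q | ∃ α β : ℝ, q = (α : ℍ[ℝ]) + m * (β : ℍ[ℝ])}

lemma inS.re_eq {m : ℍ[ℝ]} (hm : inS m) : m.re = 0 := by
  have := congrArg QuaternionAlgebra.re hm.1
  simp only [Quaternion.re_star, Quaternion.re_neg] at this
  linarith

lemma inS.normSq_eq {m : ℍ[ℝ]} (hm : inS m) : normSq m = 1 := by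
  rw [Quaternion.normSq_eq_norm_mul_self, hm.2, one_mul]

lemma inS.mul_self {m : ℍ[ℝ]} (hm : inS m) : m * m = -1 := by
  have h : star m * m = ((normSq m : ℝ) : ℍ[ℝ]) := Quaternion.star_mul_self m
  rw [hm.1, hm.normSq_eq, Quaternion.coe_one, neg_mul, neg_eq_iff_eq_neg] at h
  exact h

lemma comm_iff_slice {m : ℍ[ℝ]} (hm : inS m) (q : ℍ[ℝ]) :
    m * q = q * m ↔ q ∈ quatSlice m := by
  have h0 : m.re = 0 := hm.re_eq
  have hn : m.imI ^ 2 + m.imJ ^ 2 + m.imK ^ 2 = 1 := by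
    have := hm.normSq_eq
    rw [Quaternion.normSq_def', h0] at this
    linear_combination this
  constructor
  · intro h
    have hI := congrArg QuaternionAlgebra.imI h
    have hJ := congrArg QuaternionAlgebra.imJ h
    have hK := congrArg QuaternionAlgebra.imK h
    simp only [Quaternion.imI_mul, Quaternion.imJ_mul, Quaternion.imK_mul, h0] at hI hJ hK
    refine ⟨q.re, q.imI * m.imI + q.imJ * m.imJ + q.imK * m.imK, ?_⟩
    ext
    · simp [Quaternion.re_mul, h0]
    · simp only [Quaternion.imI_add, Quaternion.imI_coe, Quaternion.imI_mul,
        Quaternion.re_coe, Quaternion.imJ_coe, Quaternion.imK_coe, h0]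
      linear_combination (m.imK/2) * hJ - (m.imJ/2) * hK - q.imI * hn
    · simp only [Quaternion.imJ_add, Quaternion.imJ_coe, Quaternion.imJ_mul,
        Quaternion.re_coe, Quaternion.imI_coe, Quaternion.imK_coe, h0]
      linear_combination (m.imI/2) * hK - (m.imK/2) * hI - q.imJ * hn
    · simp only [Quaternion.imK_add, Quaternion.imK_coe, Quaternion.imK_mul,
        Quaternion.re_coe, Quaternion.imI_coe, Quaternion.imJ_coe, h0]
      linear_combination (m.imJ/2) * hI - (m.imI/2) * hJ - q.imK * hn
  · rintro ⟨α, β, rfl⟩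
    ext <;>
      simp only [Quaternion.re_mul, Quaternion.imI_mul, Quaternion.imJ_mul, Quaternion.imK_mul,
        Quaternion.re_add, Quaternion.imI_add, Quaternion.imJ_add, Quaternion.imK_add,
        Quaternion.re_coe, Quaternion.imI_coe, Quaternion.imJ_coe, Quaternion.imK_coe] <;>
      ring

/-- Left multiplication by `m ∈ 𝕊` on `L²(Ω; ℍ; μ)` is a surjective ℝ-linear
isometry `J` with `J² = -id`, anti self-adjoint for the real inner product, and
its slice subspace `{f : J f = f · m}` is `L²(Ω; ℂ_m; μ)`. -/
theorem left_mult_is_antiselfadjoint_unitary {Ω : Type*} [MeasurableSpace Ω]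
    (μ : Measure Ω) (m : ℍ[ℝ]) (hm : inS m) :
    ∃ J : Lp ℍ[ℝ] 2 μ → Lp ℍ[ℝ] 2 μ,
      (∀ f : Lp ℍ[ℝ] 2 μ, ∀ᵐ x ∂μ, (J f) x = m * f x) ∧
      (∀ (c : ℝ) (f g : Lp ℍ[ℝ] 2 μ), J (c • f + g) = c • J f + J g) ∧
      (∀ f : Lp ℍ[ℝ] 2 μ, ‖J f‖ = ‖f‖) ∧
      Function.Surjective J ∧
      (∀ f : Lp ℍ[ℝ] 2 μ, J (J f) = -f) ∧
      (∀ f g : Lp ℍ[ℝ] 2 μ,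
        ∫ x, (star ((J f) x) * g x).re ∂μ = -∫ x, (star (f x) * (J g) x).re ∂μ) ∧
      (∀ f : Lp ℍ[ℝ] 2 μ,
        (∀ᵐ x ∂μ, (J f) x = f x * m) ↔ (∀ᵐ x ∂μ, f x ∈ quatSlice m)) := by
  set L : ℍ[ℝ] →L[ℝ] ℍ[ℝ] := ContinuousLinearMap.mul ℝ ℍ[ℝ] m with hLdef
  have hL : ∀ q, L q = m * q := fun _ => rfl
  set J : Lp ℍ[ℝ] 2 μ → Lp ℍ[ℝ] 2 μ := fun f => L.compLpL 2 μ f with hJdef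
  have h1 : ∀ f : Lp ℍ[ℝ] 2 μ, ∀ᵐ x ∂μ, (J f) x = m * f x := by
    intro f
    filter_upwards [L.coeFn_compLpL f] with x hx
    rw [hx, hL]
  have key : ∀ f : Lp ℍ[ℝ] 2 μ, J (J f) = -f := by
    intro f
    apply Lp.ext
    filter_upwards [h1 (J f), h1 f, Lp.coeFn_neg f] with x hx1 hx2 hx3
    rw [hx1, hx2, hx3, ← mul_assoc, hm.mul_self]
    simp
  have hnormle : ∀ f : Lp ℍ[ℝ] 2 μ, ‖J f‖ ≤ ‖f‖ := by
    intro f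
    have hLnorm : ‖L‖ ≤ 1 := by
      refine L.opNorm_le_bound zero_le_one fun q => ?_
      rw [hL, norm_mul, hm.2]
    calc ‖J f‖ ≤ ‖L.compLpL 2 μ‖ * ‖f‖ := (L.compLpL 2 μ).le_opNorm f
      _ ≤ 1 * ‖f‖ := mul_le_mul_of_nonneg_right
          (le_trans (ContinuousLinearMap.norm_compLpL_le L) hLnorm) (norm_nonneg f)
      _ = ‖f‖ := one_mul _
  refine ⟨J, h1, ?_, ?_, ?_, key, ?_, ?_⟩
  · intro c f g
    simp only [hJdef, map_add, _root_.map_smul]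
  · intro f
    refine le_antisymm (hnormle f) ?_
    have h2 := hnormle (J f)
    rw [key f, norm_neg] at h2
    exact h2
  · intro f
    refine ⟨-(J f), ?_⟩
    have hneg : J (-(J f)) = -(J (J f)) := map_neg (L.compLpL 2 μ) (J f)
    rw [hneg, key, neg_neg]
  · intro f g
    rw [← MeasureTheory.integral_neg]
    apply integral_congr_ae
    filter_upwards [h1 f, h1 g] with x hx1 hx2
    rw [hx1, hx2, star_mul, hm.1, mul_neg, neg_mul, mul_assoc]
    simp
  · intro f
    constructor
    · intro h
      filter_upwards [h, h1 f] with x hx1 hx2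
      exact (comm_iff_slice hm (f x)).1 (by rw [← hx1, hx2])
    · intro h
      filter_upwards [h, h1 f] with x hx1 hx2
      rw [hx2]
      exact (comm_iff_slice hm (f x)).2 hx1

end
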